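/- arXiv:2409.13389 — 3 statements merged into one kernel-verified Lean document; each statement's English description precedes it below -/
import Mathlib

section
/- Fix x_f > 0 and γ ∈ ℝ. For σ > 0, the partial derivative ∂P/∂σ(x_f,σ,γ) vanishes if and only if γ = 1 + 1/(t²(exp(1/(2t²)) − 1)), where t = σ/x_f. -/
open Real Set

/-- Filter response of the γ-normalized first-order Gaussian derivative for a
rectangular feature of width `x_f` (closed form). -/
noncomputable def P (xf σ γ : ℝ) : ℝ :=
  (4 * σ ^ (γ - 1) / Real.sqrt (2 * Real.pi)) *
    (1 - Real.exp (-xf ^ 2 / (2 * σ ^ 2)))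

theorem deriv_P_eq_zero_iff (xf γ : ℝ) (hxf : 0 < xf) (σ : ℝ) (hσ : 0 < σ) :
    deriv (fun s => P xf s γ) σ = 0 ↔
      γ = 1 + 1 / ((σ / xf) ^ 2 * (Real.exp (1 / (2 * (σ / xf) ^ 2)) - 1)) := by
  have hσ0 : σ ≠ 0 := hσ.ne'
  have hxf0 : xf ≠ 0 := hxf.ne'
  set E : ℝ := Real.exp (-xf ^ 2 / (2 * σ ^ 2)) with hE
  have hE0 : 0 < E := Real.exp_pos _
  have hE1 : E < 1 := by
    rw [hE, Real.exp_lt_one_iff]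
    have h1 : 0 < xf ^ 2 / (2 * σ ^ 2) := by positivity
    have h2 : -xf ^ 2 / (2 * σ ^ 2) = -(xf ^ 2 / (2 * σ ^ 2)) := by ring
    linarith
  have h1E : (1 : ℝ) - E ≠ 0 := by linarith
  have hsqrt : Real.sqrt (2 * Real.pi) ≠ 0 := by positivity
  -- derivative of inner exponent
  have hinner : HasDerivAt (fun s : ℝ => -xf ^ 2 / (2 * s ^ 2)) (xf ^ 2 / σ ^ 3) σ := by
    have h2 : HasDerivAt (fun s : ℝ => 2 * s ^ 2) (2 * (2 * σ ^ 1)) σ :=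
      (hasDerivAt_pow 2 σ).const_mul 2
    have h2' : (2 * σ ^ 2 : ℝ) ≠ 0 := by positivity
    have h3 := (h2.inv h2').const_mul (-xf ^ 2)
    have hfun : (fun s : ℝ => -xf ^ 2 / (2 * s ^ 2)) = fun s => -xf ^ 2 * (2 * s ^ 2)⁻¹ := by
      funext s; rw [div_eq_mul_inv]
    rw [hfun]
    refine h3.congr_deriv ?_
    field_simp
  have hexp : HasDerivAt (fun s : ℝ => Real.exp (-xf ^ 2 / (2 * s ^ 2)))
      (E * (xf ^ 2 / σ ^ 3)) σ := hinner.exp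
  have hrpow : HasDerivAt (fun s : ℝ => s ^ (γ - 1)) ((γ - 1) * σ ^ (γ - 1 - 1)) σ :=
    Real.hasDerivAt_rpow_const (Or.inl hσ0)
  have hmul := (hrpow.mul ((hasDerivAt_const σ (1 : ℝ)).sub hexp)).const_mul
      (4 / Real.sqrt (2 * Real.pi))
  have hP : HasDerivAt (fun s => P xf s γ)
      (4 / Real.sqrt (2 * Real.pi) *
        ((γ - 1) * σ ^ (γ - 1 - 1) * (1 - E) + σ ^ (γ - 1) * (0 - E * (xf ^ 2 / σ ^ 3)))) σ := by
    refine (hmul.congr_deriv rfl).congr_of_eventuallyEq (Filter.Eventually.of_forall fun s => ?_)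
    unfold P
    simp only [Pi.mul_apply, Pi.sub_apply]
    ring
  rw [hP.deriv]
  -- rewrite σ ^ (γ - 1) = σ ^ (γ - 2) * σ
  have hsplit : σ ^ (γ - 1) = σ ^ (γ - 1 - 1) * σ := by
    rw [← Real.rpow_add_one hσ0]
    ring_nf
  rw [hsplit]
  have hK : (4 / Real.sqrt (2 * Real.pi) : ℝ) ≠ 0 := by positivity
  have hpow : σ ^ (γ - 1 - 1) ≠ 0 := (Real.rpow_pos_of_pos hσ _).ne'
  -- rewrite the exp in the RHS as E⁻¹
  have hErhs : Real.exp (1 / (2 * (σ / xf) ^ 2)) = E⁻¹ := by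
    rw [hE, ← Real.exp_neg]
    congr 1
    field_simp
  rw [hErhs]
  constructor
  · intro h
    have h' : (γ - 1) * σ ^ (γ - 1 - 1) * (1 - E) +
        σ ^ (γ - 1 - 1) * σ * (0 - E * (xf ^ 2 / σ ^ 3)) = 0 := by
      rcases mul_eq_zero.1 h with h0 | h0
      · exact absurd h0 hK
      · exact h0
    have h'' : σ ^ (γ - 1 - 1) * ((γ - 1) * (1 - E) - E * xf ^ 2 / σ ^ 2) = 0 := by
      rw [← h']
      field_simp
      ring
    have h3 : (γ - 1) * (1 - E) - E * xf ^ 2 / σ ^ 2 = 0 :=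
      (mul_eq_zero.1 h'').resolve_left hpow
    field_simp at h3 ⊢
    ring_nf
    ring_nf at h3
    nlinarith [h3, sq_nonneg σ, sq_nonneg xf]
  · intro h
    have h3 : (γ - 1) * (1 - E) - E * xf ^ 2 / σ ^ 2 = 0 := by
      rw [h]
      field_simp
      ring
    apply mul_eq_zero_of_right
    have : (γ - 1) * σ ^ (γ - 1 - 1) * (1 - E) + σ ^ (γ - 1 - 1) * σ * (0 - E * (xf ^ 2 / σ ^ 3))
        = σ ^ (γ - 1 - 1) * ((γ - 1) * (1 - E) - E * xf ^ 2 / σ ^ 2) := by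
      field_simp
      ring
    rw [this, h3, mul_zero]
end

section
/- For every t > 0 and γ ∈ ℝ, the equation γ = 1 + 1/(t²(exp(1/(2t²)) − 1)) holds if and only if y·e^y = ((1−γ)/2)·exp((1−γ)/2), where y = (1−γ)/2 − 1/(2t²). (This is the algebraic reduction that identifies t with the W_{−1} branch of the Lambert W function.) -/
open Real

theorem gamma_eq_iff_lambert_form (t γ : ℝ) (ht : 0 < t) :
    γ = 1 + 1 / (t ^ 2 * (Real.exp (1 / (2 * t ^ 2)) - 1)) ↔
      ((1 - γ) / 2 - 1 / (2 * t ^ 2)) *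
          Real.exp ((1 - γ) / 2 - 1 / (2 * t ^ 2)) =
        ((1 - γ) / 2) * Real.exp ((1 - γ) / 2) := by
  have ht2 : (0:ℝ) < t ^ 2 := by positivity
  have ht2' : (t:ℝ) ^ 2 ≠ 0 := ne_of_gt ht2
  set u : ℝ := 1 / (2 * t ^ 2) with hu
  have hu0 : 0 < u := by positivity
  have he : 1 < Real.exp u := by
    nlinarith [Real.add_one_lt_exp (ne_of_gt hu0)]
  have hE1 : Real.exp u - 1 ≠ 0 := by linarith
  have hEpos : (0:ℝ) < Real.exp u := Real.exp_pos u
  have hA : (0:ℝ) < Real.exp ((1 - γ) / 2) := Real.exp_pos _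
  have key1 : (γ = 1 + 1 / (t ^ 2 * (Real.exp u - 1))) ↔
      (1 - γ) / 2 * (Real.exp u - 1) = -u := by
    have hE1' : Real.exp (1 / (2 * t ^ 2)) - 1 ≠ 0 := hE1
    have hE1'' : Real.exp (1 / (t ^ 2 * 2)) - 1 ≠ 0 := by rw [mul_comm]; exact hE1
    rw [hu]
    constructor <;> intro h <;> field_simp at h ⊢
    · linear_combination (-1:ℝ) * h
    · linear_combination (-1:ℝ) * h
  have key2 : (((1 - γ) / 2 - u) * Real.exp ((1 - γ) / 2 - u) =
      ((1 - γ) / 2) * Real.exp ((1 - γ) / 2)) ↔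
      (1 - γ) / 2 * (Real.exp u - 1) = -u := by
    rw [Real.exp_sub]
    constructor <;> intro h
    · field_simp at h
      have h4 : ((1-γ)/2*(Real.exp u - 1) + u) * (2 * Real.exp ((1-γ)/2)) = 0 := by
        linear_combination (-Real.exp ((1-γ)/2))*h
      have h5 := (mul_eq_zero.mp h4).resolve_right (by positivity)
      linarith
    · field_simp
      linear_combination (-2:ℝ) * h
  rw [key1, key2]
end

section
/- Fix x_f > 0 and γ ∈ (1,3). Then P(x_f,σ,γ) → 0 as σ → 0⁺ and as σ → ∞, and the map σ ↦ P(x_f,σ,γ) attains a unique global maximum on (0,∞) at σ* = t·x_f, where t is the unique positive solution of γ = 1 + 1/(t²(exp(1/(2t²)) − 1)). -/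
open Real Set Filter Topology

lemma aux_G {x : ℝ} (hx : 0 < x) : Real.exp x < x * Real.exp x + 1 := by
  have h : -x + 1 < Real.exp (-x) := Real.add_one_lt_exp (by linarith)
  have hE : Real.exp (-x) * Real.exp x = 1 := by
    rw [← Real.exp_add]; simp
  nlinarith [Real.exp_pos x]

lemma F_mono : StrictMonoOn (fun x : ℝ => (Real.exp x - 1) / x) (Set.Ioi 0) := by
  apply strictMonoOn_of_deriv_pos (convex_Ioi 0)
  · exact ((Real.continuous_exp.sub continuous_const).continuousOn).div
      continuousOn_id (fun x hx => ne_of_gt hx)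
  · intro x hx
    rw [interior_Ioi] at hx
    have hd : HasDerivAt (fun x : ℝ => (Real.exp x - 1) / x)
        ((Real.exp x * x - (Real.exp x - 1) * 1) / x ^ 2) x :=
      ((Real.hasDerivAt_exp x).sub_const 1).div (hasDerivAt_id x) (ne_of_gt hx)
    rw [hd.deriv]
    have h1 := aux_G hx
    have hx2 : (0:ℝ) < x ^ 2 := pow_pos hx 2
    apply div_pos ?_ hx2
    nlinarith

lemma hasDerivAt_P (xf γ : ℝ) {σ : ℝ} (hσ : 0 < σ) :
    HasDerivAt (fun s : ℝ => P xf s γ)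
      ((4 / Real.sqrt (2 * Real.pi)) * (σ ^ (γ - 2) * Real.exp (-xf ^ 2 / (2 * σ ^ 2)) *
        ((γ - 1) * (Real.exp (xf ^ 2 / (2 * σ ^ 2)) - 1) - xf ^ 2 / σ ^ 2))) σ := by
  have hσ' : σ ≠ 0 := ne_of_gt hσ
  have h1 : HasDerivAt (fun s : ℝ => s ^ (γ - 1)) ((γ - 1) * σ ^ (γ - 2)) σ := by
    have := Real.hasDerivAt_rpow_const (x := σ) (p := γ - 1) (Or.inl hσ')
    convert this using 2
    ring_nf
  have h2 : HasDerivAt (fun s : ℝ => -xf ^ 2 / (2 * s ^ 2)) (xf ^ 2 / σ ^ 3) σ := by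
    have hp : HasDerivAt (fun s : ℝ => 2 * s ^ 2) (2 * (2 * σ ^ 1)) σ :=
      (hasDerivAt_pow 2 σ).const_mul 2
    have hp2 : (2 : ℝ) * σ ^ 2 ≠ 0 := by positivity
    have hinv := hp.inv hp2
    have := hinv.const_mul (-xf ^ 2)
    have hfe : (fun s : ℝ => -xf ^ 2 * (2 * s ^ 2)⁻¹) = fun s => -xf ^ 2 / (2 * s ^ 2) := by
      funext s; rw [div_eq_mul_inv]
    simp only [Pi.inv_apply] at this
    rw [hfe] at this
    refine this.congr_deriv ?_
    field_simp
  have h3 := h2.exp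
  have h4 := h3.const_sub 1
  have h5 := (h1.mul h4).const_mul (4 / Real.sqrt (2 * Real.pi))
  have hPfun : (fun s : ℝ => P xf s γ) =
      fun s : ℝ => 4 / Real.sqrt (2 * Real.pi) * (s ^ (γ - 1) * (1 - Real.exp (-xf ^ 2 / (2 * s ^ 2)))) := by
    funext s; unfold P; ring
  rw [hPfun]
  simp only [Pi.mul_apply] at h5
  refine h5.congr_deriv ?_
  have hr : σ ^ (γ - 1) = σ ^ (γ - 2) * σ := by
    rw [show γ - 1 = (γ - 2) + 1 by ring, Real.rpow_add hσ, Real.rpow_one]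
  rw [hr, neg_div, Real.exp_neg]
  have hB := Real.exp_ne_zero (xf ^ 2 / (2 * σ ^ 2))
  field_simp
  ring

lemma key_pos {γ u ustar : ℝ} (hγ1 : 1 < γ) (hust : 0 < ustar) (huu : ustar < u)
    (hstar : (γ - 1) * (Real.exp ustar - 1) = 2 * ustar) :
    2 * u < (γ - 1) * (Real.exp u - 1) := by
  have hu := hust.trans huu
  have h := F_mono (Set.mem_Ioi.mpr hust) (Set.mem_Ioi.mpr hu) huu
  rw [div_lt_div_iff₀ hust hu] at h
  nlinarith [mul_lt_mul_of_pos_left h (by linarith : (0:ℝ) < γ - 1)]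

lemma key_neg {γ u ustar : ℝ} (hγ1 : 1 < γ) (hu : 0 < u) (huu : u < ustar)
    (hstar : (γ - 1) * (Real.exp ustar - 1) = 2 * ustar) :
    (γ - 1) * (Real.exp u - 1) < 2 * u := by
  have hust := hu.trans huu
  have h := F_mono (Set.mem_Ioi.mpr hu) (Set.mem_Ioi.mpr hust) huu
  rw [div_lt_div_iff₀ hu hust] at h
  nlinarith [mul_lt_mul_of_pos_left h (by linarith : (0:ℝ) < γ - 1)]

theorem P_unique_global_max (xf γ : ℝ) (hxf : 0 < xf) (hγ : γ ∈ Set.Ioo (1 : ℝ) 3)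
    (t : ℝ) (ht : 0 < t)
    (hteq : γ = 1 + 1 / (t ^ 2 * (Real.exp (1 / (2 * t ^ 2)) - 1))) :
    Filter.Tendsto (fun σ : ℝ => P xf σ γ) (nhdsWithin 0 (Set.Ioi 0)) (nhds 0) ∧
    Filter.Tendsto (fun σ : ℝ => P xf σ γ) Filter.atTop (nhds 0) ∧
    (∀ σ : ℝ, 0 < σ → σ ≠ t * xf → P xf σ γ < P xf (t * xf) γ) := by
  obtain ⟨hγ1, hγ3⟩ := hγ
  have hsq : 0 < Real.sqrt (2 * Real.pi) := Real.sqrt_pos.mpr (by positivity)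
  -- nonnegativity of P for σ > 0
  have hP_nonneg : ∀ σ : ℝ, 0 < σ → 0 ≤ P xf σ γ := by
    intro σ hσ
    have hexp : Real.exp (-xf ^ 2 / (2 * σ ^ 2)) ≤ 1 := by
      rw [Real.exp_le_one_iff]
      have : 0 ≤ xf ^ 2 / (2 * σ ^ 2) := by positivity
      rw [neg_div]; linarith
    have h1 : 0 ≤ 4 * σ ^ (γ - 1) / Real.sqrt (2 * Real.pi) := by
      have := Real.rpow_pos_of_pos hσ (γ - 1)
      positivity
    exact mul_nonneg h1 (by linarith)
  constructor
  · -- limit as σ → 0⁺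
    apply squeeze_zero' (eventually_nhdsWithin_of_forall (fun σ hσ => hP_nonneg σ hσ))
      (g := fun σ : ℝ => 4 * σ ^ (γ - 1) / Real.sqrt (2 * Real.pi))
    · apply eventually_nhdsWithin_of_forall
      intro σ hσ
      have hσ' : (0:ℝ) < σ := hσ
      have h1 : 0 ≤ 4 * σ ^ (γ - 1) / Real.sqrt (2 * Real.pi) := by
        have := Real.rpow_pos_of_pos hσ' (γ - 1)
        positivity
      have hE : 0 < Real.exp (-xf ^ 2 / (2 * σ ^ 2)) := Real.exp_pos _
      calc P xf σ γ ≤ 4 * σ ^ (γ - 1) / Real.sqrt (2 * Real.pi) * 1 :=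
            mul_le_mul_of_nonneg_left (by linarith) h1
        _ = _ := mul_one _
    · have h0 : Filter.Tendsto (fun σ : ℝ => σ ^ (γ - 1)) (nhdsWithin 0 (Set.Ioi 0)) (nhds 0) := by
        have hc : ContinuousAt (fun σ : ℝ => σ ^ (γ - 1)) 0 :=
          Real.continuousAt_rpow_const 0 (γ - 1) (Or.inr (by linarith))
        have h2 : Filter.Tendsto (fun σ : ℝ => σ ^ (γ - 1)) (nhdsWithin 0 (Set.Ioi 0))
            (nhds ((0:ℝ) ^ (γ - 1))) := hc.tendsto.mono_left nhdsWithin_le_nhds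
        rwa [Real.zero_rpow (by linarith : γ - 1 ≠ 0)] at h2
      have := (h0.const_mul 4).div_const (Real.sqrt (2 * Real.pi))
      simp only [mul_zero, zero_div] at this
      exact this.mono_left (nhdsWithin_mono _ (fun x hx => hx))
  constructor
  · -- limit as σ → ∞
    apply squeeze_zero' (Filter.eventually_atTop.mpr ⟨1, fun σ hσ => hP_nonneg σ (by linarith)⟩)
      (g := fun σ : ℝ => (4 * (xf ^ 2 / 2) / Real.sqrt (2 * Real.pi)) * σ ^ (γ - 3))
    · apply Filter.eventually_atTop.mpr ⟨1, fun σ hσ => ?_⟩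
      have hσ' : (0:ℝ) < σ := by linarith
      have hbd : 1 - Real.exp (-xf ^ 2 / (2 * σ ^ 2)) ≤ xf ^ 2 / (2 * σ ^ 2) := by
        have := Real.add_one_le_exp (-(xf ^ 2 / (2 * σ ^ 2)))
        rw [neg_div]; linarith
      have h1 : 0 ≤ 4 * σ ^ (γ - 1) / Real.sqrt (2 * Real.pi) := by
        have := Real.rpow_pos_of_pos hσ' (γ - 1)
        positivity
      have heq : 4 * σ ^ (γ - 1) / Real.sqrt (2 * Real.pi) * (xf ^ 2 / (2 * σ ^ 2)) =
          (4 * (xf ^ 2 / 2) / Real.sqrt (2 * Real.pi)) * σ ^ (γ - 3) := by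
        have hr : σ ^ (γ - 1) = σ ^ (γ - 3) * σ ^ (2:ℕ) := by
          rw [← Real.rpow_natCast σ 2, ← Real.rpow_add hσ']
          congr 1
          push_cast
          ring
        rw [hr]
        have hσ2 : (σ:ℝ) ^ (2:ℕ) ≠ 0 := by positivity
        field_simp
      calc P xf σ γ ≤ 4 * σ ^ (γ - 1) / Real.sqrt (2 * Real.pi) * (xf ^ 2 / (2 * σ ^ 2)) :=
            mul_le_mul_of_nonneg_left hbd h1
        _ = _ := heq
    · have h0 : Filter.Tendsto (fun σ : ℝ => σ ^ (γ - 3)) Filter.atTop (nhds 0) := by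
        have := tendsto_rpow_neg_atTop (by linarith : (0:ℝ) < 3 - γ)
        simpa [show -(3 - γ) = γ - 3 by ring] using this
      simpa using h0.const_mul (4 * (xf ^ 2 / 2) / Real.sqrt (2 * Real.pi))
  · -- unique global max
    intro σ hσ hne
    set σs := t * xf with hσs_def
    have hσs : 0 < σs := mul_pos ht hxf
    -- the critical equation in clean form
    have hE1 : 1 < Real.exp (1 / (2 * t ^ 2)) :=
      Real.one_lt_exp_iff.mpr (by positivity)
    have hstar : (γ - 1) * (Real.exp (1 / (2 * t ^ 2)) - 1) = 2 * (1 / (2 * t ^ 2)) := by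
      have ht2 : t ^ 2 * (Real.exp (1 / (2 * t ^ 2)) - 1) ≠ 0 := by
        have : 0 < Real.exp (1 / (2 * t ^ 2)) - 1 := by linarith
        positivity
      have hE0 : Real.exp (1 / (2 * t ^ 2)) - 1 ≠ 0 := by linarith
      rw [hteq, add_sub_cancel_left]
      field_simp
      have hE0' : Real.exp (1 / (t ^ 2 * 2)) - 1 ≠ 0 := by rw [mul_comm]; exact hE0
      exact div_self hE0'
    -- derivative positivity on (0, σs)
    have hDpos : ∀ x ∈ Set.Ioo (0:ℝ) σs, 0 < deriv (fun s : ℝ => P xf s γ) x := by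
      intro x hx
      rw [(hasDerivAt_P xf γ hx.1).deriv]
      have hx1 := hx.1
      have hbr : 2 * (xf ^ 2 / (2 * x ^ 2)) < (γ - 1) * (Real.exp (xf ^ 2 / (2 * x ^ 2)) - 1) := by
        apply key_pos hγ1 (by positivity) ?_ hstar
        rw [div_lt_div_iff₀ (by positivity) (by positivity)]
        nlinarith [hx.2, mul_pos ht hxf]
      have h2 : xf ^ 2 / x ^ 2 = 2 * (xf ^ 2 / (2 * x ^ 2)) := by ring
      have hrp := Real.rpow_pos_of_pos hx.1 (γ - 2)
      have hep := Real.exp_pos (-xf ^ 2 / (2 * x ^ 2))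
      apply mul_pos (by positivity)
      apply mul_pos (mul_pos hrp hep)
      rw [h2]; linarith
    have hDneg : ∀ x ∈ Set.Ioi σs, deriv (fun s : ℝ => P xf s γ) x < 0 := by
      intro x hx
      have hx1 : 0 < x := hσs.trans hx
      rw [(hasDerivAt_P xf γ hx1).deriv]
      have hbr : (γ - 1) * (Real.exp (xf ^ 2 / (2 * x ^ 2)) - 1) < 2 * (xf ^ 2 / (2 * x ^ 2)) := by
        apply key_neg hγ1 (by positivity) ?_ hstar
        rw [div_lt_div_iff₀ (by positivity) (by positivity)]
        nlinarith [Set.mem_Ioi.mp hx, mul_pos ht hxf, hx1]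
      have h2 : xf ^ 2 / x ^ 2 = 2 * (xf ^ 2 / (2 * x ^ 2)) := by ring
      have hrp := Real.rpow_pos_of_pos hx1 (γ - 2)
      have hep := Real.exp_pos (-xf ^ 2 / (2 * x ^ 2))
      have hneg : σ ^ 0 = σ ^ 0 := rfl
      apply mul_neg_of_pos_of_neg (by positivity)
      apply mul_neg_of_pos_of_neg (mul_pos hrp hep)
      rw [h2]; linarith
    have hmono : StrictMonoOn (fun s : ℝ => P xf s γ) (Set.Ioc 0 σs) := by
      apply strictMonoOn_of_deriv_pos (convex_Ioc 0 σs)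
      · intro x hx
        exact ((hasDerivAt_P xf γ hx.1).continuousAt).continuousWithinAt
      · intro x hx
        rw [interior_Ioc] at hx
        exact hDpos x hx
    have hanti : StrictAntiOn (fun s : ℝ => P xf s γ) (Set.Ici σs) := by
      apply strictAntiOn_of_deriv_neg (convex_Ici σs)
      · intro x hx
        exact ((hasDerivAt_P xf γ (lt_of_lt_of_le hσs hx)).continuousAt).continuousWithinAt
      · intro x hx
        rw [interior_Ici] at hx
        exact hDneg x hx
    rcases lt_or_gt_of_ne hne with h | h
    · exact hmono ⟨hσ, h.le⟩ ⟨hσs, le_refl _⟩ h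
    · exact hanti (Set.self_mem_Ici) (Set.mem_Ici.mpr h.le) h
end
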